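/- The unique fixed point: if σ_s < σ_t, there exists a unique continuous Ψ on [0,L] satisfying Ψ(s) = (1/2)∫_{-1}^{1} I_μ[Ψ](s) dμ where, for each μ > 0, I_μ[Ψ] is the MoC solution with input Ψ; uniqueness follows from the Banach fixed point theorem applied to the contraction with constant σ_s/σ_t. -/

import Mathlib

open Real Set

/-- The Method of Characteristics angular flux with input average flux `Ψ`,
boundary value `Ibd` and source `q`, at position `x` in direction `μ`. -/
noncomputable def Imoc (σt σs a b Ibd : ℝ) (q : ℝ → ℝ) (Ψ : ℝ → ℝ) (x μ : ℝ) : ℝ :=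
  let x0 : ℝ := if 0 < μ then a else b
  let s : ℝ := (x - x0) / μ
  Ibd * Real.exp (-σt * s)
    + ∫ s' in (0:ℝ)..s, (σs * Ψ (x0 + s' * μ) + q (x0 + s' * μ)) * Real.exp (-σt * (s - s'))


open MeasureTheory


/-- Generic MoC operator with combined source `H`. -/
noncomputable def Jop (σt Ibd a b : ℝ) (H : ℝ → ℝ) (x μ : ℝ) : ℝ :=
  Ibd * Real.exp (-σt * ((x - (if 0 < μ then a else b)) / μ))
    + ∫ s' in (0:ℝ)..((x - (if 0 < μ then a else b)) / μ),
        H ((if 0 < μ then a else b) + s' * μ)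
          * Real.exp (-σt * ((x - (if 0 < μ then a else b)) / μ - s'))

section lemmas

variable {σt σs a b Ibd : ℝ}

lemma s_nonneg (hx : a ≤ x ∧ x ≤ b) (μ : ℝ) :
    0 ≤ (x - (if 0 < μ then a else b)) / μ := by
  rcases lt_trichotomy 0 μ with h | h | h
  · rw [if_pos h]; exact div_nonneg (by linarith [hx.1]) h.le
  · rw [← h, div_zero]
  · rw [if_neg (by exact not_lt.mpr h.le)]
    exact div_nonneg_iff.mpr (Or.inr ⟨by linarith [hx.2], h.le⟩)

lemma key_bound (hσt : 0 < σt) {g : ℝ → ℝ} {C s : ℝ}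
    (hC : ∀ y, |g y| ≤ C) (hs : 0 ≤ s) :
    |∫ s' in (0:ℝ)..s, g s' * Real.exp (-σt * (s - s'))| ≤ C / σt := by
  have hC0 : 0 ≤ C := (abs_nonneg _).trans (hC 0)
  have hval : (∫ s' in (0:ℝ)..s, Real.exp (-σt * (s - s')))
      = (1 - Real.exp (-σt * s)) / σt := by
    rw [intervalIntegral.integral_comp_sub_left (fun u => Real.exp (-σt * u)) s]
    simp only [sub_self, sub_zero]
    rw [intervalIntegral.integral_comp_mul_left (fun u => Real.exp u)
      (by exact neg_ne_zero.mpr hσt.ne')]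
    rw [mul_zero, integral_exp, smul_eq_mul, Real.exp_zero]
    rw [inv_neg, div_eq_mul_inv]
    ring
  have h1 : |∫ s' in (0:ℝ)..s, g s' * Real.exp (-σt * (s - s'))|
      ≤ |∫ s' in (0:ℝ)..s, C * Real.exp (-σt * (s - s'))| := by
    rw [← Real.norm_eq_abs]
    apply intervalIntegral.norm_integral_le_abs_of_norm_le
    · refine ae_of_all _ fun t => ?_
      rw [Real.norm_eq_abs, abs_mul, abs_of_nonneg (Real.exp_nonneg _)]
      exact mul_le_mul_of_nonneg_right (hC t) (Real.exp_nonneg _)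
    · exact (continuous_const.mul
        ((Real.continuous_exp.comp (continuous_const.mul
          (continuous_const.sub continuous_id))))).intervalIntegrable _ _
  rw [intervalIntegral.integral_const_mul, hval] at h1
  refine h1.trans ?_
  have hE0 : (0:ℝ) < Real.exp (-σt * s) := Real.exp_pos _
  have hE1 : Real.exp (-σt * s) ≤ 1 := by
    rw [← Real.exp_zero]
    exact Real.exp_le_exp.mpr (by nlinarith)
  have hE2 : (0:ℝ) ≤ 1 - Real.exp (-σt * s) := by linarith
  rw [abs_of_nonneg (mul_nonneg hC0 (div_nonneg hE2 hσt.le))]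
  calc C * ((1 - Real.exp (-σt * s)) / σt) = C * (1 - Real.exp (-σt * s)) / σt := by ring
    _ ≤ C / σt := by gcongr; nlinarith

lemma Jop_eq_primitive (H : ℝ → ℝ) (x μ : ℝ) :
    Jop σt Ibd a b H x μ =
      Real.exp (-σt * ((x - (if 0 < μ then a else b)) / μ)) *
        (Ibd + ∫ s' in (0:ℝ)..((x - (if 0 < μ then a else b)) / μ),
          H ((if 0 < μ then a else b) + s' * μ) * Real.exp (σt * s')) := by
  set x0 := if 0 < μ then a else b
  set s := (x - x0) / μ with hs
  have h1 : ∀ s' : ℝ, H (x0 + s' * μ) * Real.exp (-σt * (s - s'))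
      = (H (x0 + s' * μ) * Real.exp (σt * s')) * Real.exp (-σt * s) := by
    intro s'
    rw [mul_assoc, ← Real.exp_add]
    ring_nf
  unfold Jop
  rw [show (∫ s' in (0:ℝ)..s, H (x0 + s' * μ) * Real.exp (-σt * (s - s')))
      = ∫ s' in (0:ℝ)..s, (H (x0 + s' * μ) * Real.exp (σt * s')) * Real.exp (-σt * s) from
      intervalIntegral.integral_congr fun s' _ => h1 s']
  rw [intervalIntegral.integral_mul_const]
  ring

lemma Jop_cont_x {H : ℝ → ℝ} (hH : Continuous H) (μ : ℝ) :
    Continuous fun x => Jop σt Ibd a b H x μ := by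
  have hP : Continuous fun t : ℝ => ∫ s' in (0:ℝ)..t,
      H ((if 0 < μ then a else b) + s' * μ) * Real.exp (σt * s') := by
    apply intervalIntegral.continuous_primitive
    intro c d
    exact ((hH.comp (continuous_const.add (continuous_id.mul continuous_const))).mul
      (Real.continuous_exp.comp (continuous_const.mul continuous_id))).intervalIntegrable c d
  have hs : Continuous fun x : ℝ => (x - (if 0 < μ then a else b)) / μ :=
    (continuous_id.sub continuous_const).div_const μ
  have key : Continuous fun x : ℝ => Real.exp (-σt * ((x - (if 0 < μ then a else b)) / μ)) *
      (Ibd + ∫ s' in (0:ℝ)..((x - (if 0 < μ then a else b)) / μ),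
        H ((if 0 < μ then a else b) + s' * μ) * Real.exp (σt * s')) :=
    (Real.continuous_exp.comp (continuous_const.mul hs)).mul
      (continuous_const.add (hP.comp hs))
  exact key.congr fun x => (Jop_eq_primitive H x μ).symm

lemma Jop_bound (hσt : 0 < σt) {H : ℝ → ℝ} {C : ℝ} (hC : ∀ y, |H y| ≤ C)
    {x : ℝ} (hx : a ≤ x ∧ x ≤ b) (μ : ℝ) :
    |Jop σt Ibd a b H x μ| ≤ |Ibd| + C / σt := by
  have hs := s_nonneg hx μ
  unfold Jop
  refine (abs_add_le _ _).trans ?_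
  apply add_le_add
  · rw [abs_mul, abs_of_nonneg (Real.exp_nonneg _)]
    calc |Ibd| * Real.exp (-σt * ((x - if 0 < μ then a else b) / μ))
        ≤ |Ibd| * 1 := by
          gcongr
          rw [← Real.exp_zero]
          exact Real.exp_le_exp.mpr (by nlinarith)
      _ = |Ibd| := mul_one _
  · exact key_bound hσt (fun y => hC ((if 0 < μ then a else b) + y * μ)) hs

lemma Jop_sub_bound (hσt : 0 < σt) {H1 H2 : ℝ → ℝ} (h1 : Continuous H1) (h2 : Continuous H2)
    {d : ℝ} (hd : ∀ y, |H1 y - H2 y| ≤ d) {x : ℝ} (hx : a ≤ x ∧ x ≤ b) (μ : ℝ) :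
    |Jop σt Ibd a b H1 x μ - Jop σt Ibd a b H2 x μ| ≤ d / σt := by
  have hs := s_nonneg hx μ
  set x0 := if 0 < μ then a else b
  set s := (x - x0) / μ with hsdef
  have hint : ∀ (H : ℝ → ℝ), Continuous H → IntervalIntegrable
      (fun s' => H (x0 + s' * μ) * Real.exp (-σt * (s - s'))) MeasureTheory.volume 0 s := by
    intro H hH
    exact ((hH.comp (continuous_const.add (continuous_id.mul continuous_const))).mul
      (Real.continuous_exp.comp (continuous_const.mul
        (continuous_const.sub continuous_id)))).intervalIntegrable _ _
  have heq : Jop σt Ibd a b H1 x μ - Jop σt Ibd a b H2 x μ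
      = ∫ s' in (0:ℝ)..s, (H1 (x0 + s' * μ) - H2 (x0 + s' * μ)) * Real.exp (-σt * (s - s')) := by
    unfold Jop
    rw [show (∫ s' in (0:ℝ)..s, (H1 (x0 + s' * μ) - H2 (x0 + s' * μ)) * Real.exp (-σt * (s - s')))
        = ∫ s' in (0:ℝ)..s, (H1 (x0 + s' * μ) * Real.exp (-σt * (s - s'))
            - H2 (x0 + s' * μ) * Real.exp (-σt * (s - s'))) from
        intervalIntegral.integral_congr fun s' _ => by ring]
    rw [intervalIntegral.integral_sub (hint H1 h1) (hint H2 h2)]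
    ring
  rw [heq]
  exact key_bound hσt (fun y => hd (x0 + y * μ)) hs

lemma Jop_congr {H1 H2 : ℝ → ℝ} (hab : a ≤ b) (h : ∀ y ∈ Icc a b, H1 y = H2 y)
    {x : ℝ} (hx : x ∈ Icc a b) (μ : ℝ) :
    Jop σt Ibd a b H1 x μ = Jop σt Ibd a b H2 x μ := by
  have hs := s_nonneg (⟨hx.1, hx.2⟩ : a ≤ x ∧ x ≤ b) μ
  unfold Jop
  congr 1
  refine intervalIntegral.integral_congr fun s' hs' => ?_
  rw [uIcc_of_le hs] at hs'
  have hmem : ((if 0 < μ then a else b) + s' * μ) ∈ Icc a b := by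
    rcases lt_trichotomy 0 μ with hμ | hμ | hμ
    · rw [if_pos hμ]
      have hsx : ((x - a) / μ) * μ = x - a := div_mul_cancel₀ _ hμ.ne'
      simp only [if_pos hμ] at hs'
      constructor
      · nlinarith [hs'.1, hs'.2]
      · have : s' * μ ≤ ((x - a) / μ) * μ := by
          apply mul_le_mul_of_nonneg_right hs'.2 hμ.le
        nlinarith [hx.2]
    · rw [if_neg (by rw [← hμ]; exact lt_irrefl 0)]
      rw [← hμ, mul_zero, add_zero]
      exact ⟨hab, le_refl b⟩
    · rw [if_neg (not_lt.mpr hμ.le)]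
      have hsx : ((x - b) / μ) * μ = x - b := div_mul_cancel₀ _ hμ.ne
      simp only [if_neg (not_lt.mpr hμ.le)] at hs'
      constructor
      · have : ((x - b) / μ) * μ ≤ s' * μ := mul_le_mul_of_nonpos_right hs'.2 hμ.le
        nlinarith [hx.1]
      · nlinarith [hs'.1, hs'.2]
  rw [h _ hmem]


lemma Jop_formula (H : ℝ → ℝ) (x : ℝ) {μ : ℝ} (hμ : μ ≠ 0) :
    Jop σt Ibd a b H x μ =
      Real.exp (-σt * ((x - (if 0 < μ then a else b)) / μ)) *
        (Ibd + μ⁻¹ * ∫ y in (if 0 < μ then a else b)..x,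
            H y * Real.exp (σt * ((y - (if 0 < μ then a else b)) / μ))) := by
  rw [Jop_eq_primitive]
  set x0 := if 0 < μ then a else b with hx0
  set s := (x - x0) / μ with hsdef
  congr 2
  have hsub : ∀ s' : ℝ, H (x0 + s' * μ) * Real.exp (σt * s')
      = (fun y => H y * Real.exp (σt * ((y - x0) / μ))) (μ * s' + x0) := by
    intro s'
    simp only
    rw [add_sub_cancel_right, mul_div_cancel_left₀ _ hμ,
      show μ * s' + x0 = x0 + s' * μ from by ring]
  calc (∫ s' in (0:ℝ)..s, H (x0 + s' * μ) * Real.exp (σt * s'))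
      = ∫ s' in (0:ℝ)..s,
          (fun y => H y * Real.exp (σt * ((y - x0) / μ))) (μ * s' + x0) :=
        intervalIntegral.integral_congr fun s' _ => hsub s'
    _ = μ⁻¹ • ∫ y in (μ * 0 + x0)..(μ * s + x0),
          H y * Real.exp (σt * ((y - x0) / μ)) :=
        intervalIntegral.integral_comp_mul_add (fun y => H y * Real.exp (σt * ((y - x0) / μ))) hμ x0
    _ = μ⁻¹ * ∫ y in x0..x, H y * Real.exp (σt * ((y - x0) / μ)) := by
        rw [smul_eq_mul, mul_zero, zero_add,
          show μ * s + x0 = x from by rw [hsdef]; field_simp; ring]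

lemma cont_mu_integral (hσt : 0 < σt) {H : ℝ → ℝ} (hH : Continuous H) {C : ℝ}
    (hC : ∀ y, |H y| ≤ C) (x0 x : ℝ) :
    ContinuousOn (fun μ : ℝ => ∫ y in x0..x, H y * Real.exp (σt * ((y - x0) / μ)))
      {μ : ℝ | μ ≠ 0} := by
  have hC0 : 0 ≤ C := (abs_nonneg _).trans (hC 0)
  intro μ0 hμ0
  have hμ0ne : μ0 ≠ 0 := hμ0
  have hμ0' : (0:ℝ) < |μ0| := abs_pos.mpr hμ0ne
  apply ContinuousAt.continuousWithinAt
  apply intervalIntegral.continuousAt_of_dominated_interval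
    (bound := fun _ => C * Real.exp (σt * (|x - x0| / (|μ0| / 2))))
  · refine Filter.Eventually.of_forall fun μ => ?_
    exact ((hH.mul (Real.continuous_exp.comp (continuous_const.mul
      ((continuous_id.sub continuous_const).div_const μ)))).aestronglyMeasurable)
  · have hU : {μ : ℝ | |μ0| / 2 < |μ|} ∈ nhds μ0 := by
      apply (isOpen_lt continuous_const continuous_abs).mem_nhds
      show |μ0| / 2 < |μ0|
      linarith
    refine Filter.eventually_of_mem hU fun μ hμ => MeasureTheory.ae_of_all _ fun y hy => ?_
    have hμ' : |μ0| / 2 < |μ| := hμ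
    have hμpos : 0 < |μ| := lt_trans (by linarith) hμ'
    have hy1 : min x0 x < y := hy.1
    have hy2 : y ≤ max x0 x := hy.2
    have habs : |x - x0| = max x0 x - min x0 x := by
      rw [abs_sub_comm, ← max_sub_min_eq_abs, max_comm, min_comm]
    have hy' : |y - x0| ≤ |x - x0| := by
      rw [abs_sub_le_iff, habs]
      constructor <;> [linarith [min_le_left x0 x]; linarith [le_max_left x0 x]]
    rw [Real.norm_eq_abs, abs_mul, abs_of_nonneg (Real.exp_nonneg _)]
    apply mul_le_mul (hC y) ?_ (Real.exp_nonneg _) hC0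
    apply Real.exp_le_exp.mpr
    apply mul_le_mul_of_nonneg_left ?_ hσt.le
    calc (y - x0) / μ ≤ |(y - x0) / μ| := le_abs_self _
      _ = |y - x0| / |μ| := abs_div _ _
      _ ≤ |x - x0| / (|μ0| / 2) := by
          apply div_le_div₀ (abs_nonneg _) hy' (by linarith) hμ'.le
  · exact intervalIntegrable_const
  · refine Filter.Eventually.of_forall fun y _ => ?_
    exact continuousAt_const.mul (Real.continuous_exp.continuousAt.comp
      (continuousAt_const.mul (continuousAt_const.div continuousAt_id hμ0ne)))

lemma Jop_contOn_mu (hσt : 0 < σt) {H : ℝ → ℝ} (hH : Continuous H) {C : ℝ}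
    (hC : ∀ y, |H y| ≤ C) (x : ℝ) :
    ContinuousOn (fun μ => Jop σt Ibd a b H x μ) {μ : ℝ | μ ≠ 0} := by
  intro μ0 hμ0
  have hμ0ne : μ0 ≠ 0 := hμ0
  apply ContinuousAt.continuousWithinAt
  rcases lt_or_gt_of_ne hμ0ne with hneg | hpos
  · have hmem : Iio (0:ℝ) ∈ nhds μ0 := Iio_mem_nhds hneg
    apply ContinuousOn.continuousAt ?_ hmem
    have hne : ∀ μ ∈ Iio (0:ℝ), μ ≠ 0 := fun μ hμ => ne_of_lt hμ
    have hform : EqOn (fun μ => Jop σt Ibd a b H x μ)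
        (fun μ => Real.exp (-σt * ((x - b) / μ)) *
          (Ibd + μ⁻¹ * ∫ y in b..x, H y * Real.exp (σt * ((y - b) / μ)))) (Iio (0:ℝ)) := by
      intro μ hμ
      show Jop σt Ibd a b H x μ = _
      rw [Jop_formula H x (hne μ hμ)]
      simp only [if_neg (not_lt.mpr (le_of_lt (show μ < 0 from hμ)))]
    refine ContinuousOn.congr ?_ hform
    apply ContinuousOn.mul
    · exact Real.continuous_exp.comp_continuousOn
        (continuousOn_const.mul (continuousOn_const.div continuousOn_id hne))
    · apply continuousOn_const.add
      exact ContinuousOn.mul (continuousOn_id.inv₀ hne)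
        ((cont_mu_integral hσt hH hC b x).mono (fun μ hμ => hne μ hμ))
  · have hmem : Ioi (0:ℝ) ∈ nhds μ0 := Ioi_mem_nhds hpos
    apply ContinuousOn.continuousAt ?_ hmem
    have hne : ∀ μ ∈ Ioi (0:ℝ), μ ≠ 0 := fun μ hμ => (ne_of_gt hμ)
    have hform : EqOn (fun μ => Jop σt Ibd a b H x μ)
        (fun μ => Real.exp (-σt * ((x - a) / μ)) *
          (Ibd + μ⁻¹ * ∫ y in a..x, H y * Real.exp (σt * ((y - a) / μ)))) (Ioi (0:ℝ)) := by
      intro μ hμ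
      show Jop σt Ibd a b H x μ = _
      rw [Jop_formula H x (hne μ hμ)]
      simp only [if_pos (show (0:ℝ) < μ from hμ)]
    refine ContinuousOn.congr ?_ hform
    apply ContinuousOn.mul
    · exact Real.continuous_exp.comp_continuousOn
        (continuousOn_const.mul (continuousOn_const.div continuousOn_id hne))
    · apply continuousOn_const.add
      exact ContinuousOn.mul (continuousOn_id.inv₀ hne)
        ((cont_mu_integral hσt hH hC a x).mono (fun μ hμ => hne μ hμ))

lemma Jop_aesm (hσt : 0 < σt) {H : ℝ → ℝ} (hH : Continuous H) {C : ℝ}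
    (hC : ∀ y, |H y| ≤ C) (x : ℝ) :
    MeasureTheory.AEStronglyMeasurable (fun μ => Jop σt Ibd a b H x μ)
      (MeasureTheory.volume.restrict (Set.Ioc (-1:ℝ) 1)) := by
  have hsub : (Set.Ioc (-1:ℝ) 1 \ {0}) ⊆ {μ : ℝ | μ ≠ 0} := fun μ hμ => hμ.2
  have hmeas : MeasurableSet (Set.Ioc (-1:ℝ) 1 \ {0}) :=
    measurableSet_Ioc.diff (measurableSet_singleton 0)
  have h2 : MeasureTheory.AEStronglyMeasurable (fun μ => Jop σt Ibd a b H x μ)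
      (MeasureTheory.volume.restrict (Set.Ioc (-1:ℝ) 1 \ {0})) :=
    ((Jop_contOn_mu hσt hH hC x).mono hsub).aestronglyMeasurable hmeas
  have h3 : MeasureTheory.volume.restrict (Set.Ioc (-1:ℝ) 1 \ {0})
      = MeasureTheory.volume.restrict (Set.Ioc (-1:ℝ) 1) := by
    apply MeasureTheory.Measure.restrict_congr_set
    refine MeasureTheory.diff_ae_eq_self.mpr ?_
    exact MeasureTheory.measure_mono_null inter_subset_right (MeasureTheory.measure_singleton 0)
  rwa [h3] at h2

lemma Jop_integrable (hσt : 0 < σt) {H : ℝ → ℝ} (hH : Continuous H) {C : ℝ}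
    (hC : ∀ y, |H y| ≤ C) {x : ℝ} (hx : a ≤ x ∧ x ≤ b) :
    IntervalIntegrable (fun μ => Jop σt Ibd a b H x μ) MeasureTheory.volume (-1) 1 := by
  rw [intervalIntegrable_iff, uIoc_of_le (by norm_num : (-1:ℝ) ≤ 1)]
  apply MeasureTheory.Integrable.mono' (MeasureTheory.integrable_const (|Ibd| + C / σt))
    (Jop_aesm hσt hH hC x)
  exact MeasureTheory.ae_of_all _ fun μ => by
    rw [Real.norm_eq_abs]; exact Jop_bound hσt hC hx μ

lemma Jop_outer_cont (hσt : 0 < σt) {H : ℝ → ℝ} (hH : Continuous H) {C : ℝ}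
    (hC : ∀ y, |H y| ≤ C) :
    ContinuousOn (fun x => ∫ μ in (-1:ℝ)..1, Jop σt Ibd a b H x μ) (Icc a b) := by
  have heq : ∀ x : ℝ, (∫ μ in (-1:ℝ)..1, Jop σt Ibd a b H x μ)
      = ∫ μ in Set.Ioc (-1:ℝ) 1, Jop σt Ibd a b H x μ := by
    intro x
    rw [intervalIntegral.integral_of_le (by norm_num : (-1:ℝ) ≤ 1)]
  refine ContinuousOn.congr ?_ fun x _ => heq x
  apply MeasureTheory.continuousOn_of_dominated (bound := fun _ => |Ibd| + C / σt)
  · intro x _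
    exact Jop_aesm hσt hH hC x
  · intro x hx
    exact MeasureTheory.ae_of_all _ fun μ => by
      rw [Real.norm_eq_abs]; exact Jop_bound hσt hC ⟨hx.1, hx.2⟩ μ
  · exact MeasureTheory.integrable_const _
  · exact MeasureTheory.ae_of_all _ fun μ => (Jop_cont_x hH μ).continuousOn

end lemmas

lemma Imoc_eq_Jop (σt σs a b Ibd : ℝ) (q Ψ : ℝ → ℝ) (x μ : ℝ) :
    Imoc σt σs a b Ibd q Ψ x μ
      = Jop σt Ibd a b (fun y => σs * Ψ y + q y) x μ := rfl

/-- The fixed point operator on `C(Icc a b, ℝ)`. -/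
noncomputable def Tmap (σt σs a b Ibd : ℝ) (hσt : 0 < σt) (hσs : 0 ≤ σs) (hab : a ≤ b)
    (q : ℝ → ℝ) (hq : ContinuousOn q (Icc a b)) (Φ : C(Icc a b, ℝ)) : C(Icc a b, ℝ) where
  toFun := fun z => (1/2 : ℝ) * ∫ μ in (-1:ℝ)..1,
    Jop σt Ibd a b (fun y => σs * Φ (projIcc a b hab y) + q (projIcc a b hab y)) (z : ℝ) μ
  continuous_toFun := by
    obtain ⟨Cq, hCq⟩ := isCompact_Icc.exists_bound_of_continuousOn hq
    have hHc : Continuous fun y => σs * Φ (projIcc a b hab y) + q (projIcc a b hab y) :=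
      ((continuous_const.mul (Φ.continuous.comp continuous_projIcc))).add
        (hq.restrict.comp continuous_projIcc)
    have hHb : ∀ y, |σs * Φ (projIcc a b hab y) + q (projIcc a b hab y)| ≤ σs * ‖Φ‖ + Cq := by
      intro y
      refine (abs_add_le _ _).trans (add_le_add ?_ ?_)
      · rw [abs_mul, abs_of_nonneg hσs]
        refine mul_le_mul_of_nonneg_left ?_ hσs
        rw [← Real.norm_eq_abs]
        exact Φ.norm_coe_le_norm _
      · rw [← Real.norm_eq_abs]
        exact hCq _ (projIcc a b hab y).2
    exact ContinuousOn.restrict (continuousOn_const.mul (Jop_outer_cont hσt hHc hHb))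

theorem stmt8 (σt σs a b Ibd : ℝ) (hσt : 0 < σt) (hσs : 0 ≤ σs) (hcontr : σs < σt)
    (hab : a ≤ b) (q : ℝ → ℝ) (hq : ContinuousOn q (Icc a b)) :
    ∃ Ψ : ℝ → ℝ, (ContinuousOn Ψ (Icc a b) ∧
        ∀ x ∈ Icc a b, Ψ x = (1/2 : ℝ) * ∫ μ in (-1:ℝ)..1, Imoc σt σs a b Ibd q Ψ x μ) ∧
      ∀ Ψ' : ℝ → ℝ, (ContinuousOn Ψ' (Icc a b) ∧
        ∀ x ∈ Icc a b, Ψ' x = (1/2 : ℝ) * ∫ μ in (-1:ℝ)..1, Imoc σt σs a b Ibd q Ψ' x μ) →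
      ∀ x ∈ Icc a b, Ψ' x = Ψ x := by
  obtain ⟨Cq, hCq⟩ := isCompact_Icc.exists_bound_of_continuousOn hq
  set T := Tmap σt σs a b Ibd hσt hσs hab q hq with hTdef
  have hHc : ∀ Φ : C(Icc a b, ℝ),
      Continuous fun y => σs * Φ (projIcc a b hab y) + q (projIcc a b hab y) := fun Φ =>
    ((continuous_const.mul (Φ.continuous.comp continuous_projIcc))).add
      (hq.restrict.comp continuous_projIcc)
  have hHb : ∀ Φ : C(Icc a b, ℝ), ∀ y,
      |σs * Φ (projIcc a b hab y) + q (projIcc a b hab y)| ≤ σs * ‖Φ‖ + Cq := by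
    intro Φ y
    refine (abs_add_le _ _).trans (add_le_add ?_ ?_)
    · rw [abs_mul, abs_of_nonneg hσs]
      refine mul_le_mul_of_nonneg_left ?_ hσs
      rw [← Real.norm_eq_abs]
      exact Φ.norm_coe_le_norm _
    · rw [← Real.norm_eq_abs]
      exact hCq _ (projIcc a b hab y).2
  set k : NNReal := ⟨σs / σt, div_nonneg hσs hσt.le⟩ with hkdef
  have hk1 : k < 1 := by
    rw [← NNReal.coe_lt_coe, NNReal.coe_one]
    exact (div_lt_one hσt).mpr hcontr
  have hlip : LipschitzWith k T := by
    apply LipschitzWith.of_dist_le_mul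
    intro Φ1 Φ2
    have hkc : (k : ℝ) = σs / σt := rfl
    rw [hkc, ContinuousMap.dist_le (mul_nonneg (div_nonneg hσs hσt.le) dist_nonneg)]
    intro z
    have hz : a ≤ (z : ℝ) ∧ (z : ℝ) ≤ b := ⟨z.2.1, z.2.2⟩
    have hint1 := Jop_integrable (Ibd := Ibd) hσt (hHc Φ1) (hHb Φ1) hz
    have hint2 := Jop_integrable (Ibd := Ibd) hσt (hHc Φ2) (hHb Φ2) hz
    have hTeq : T Φ1 z - T Φ2 z = (1/2 : ℝ) * ∫ μ in (-1:ℝ)..1,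
        (Jop σt Ibd a b (fun y => σs * Φ1 (projIcc a b hab y) + q (projIcc a b hab y)) (z:ℝ) μ
          - Jop σt Ibd a b
              (fun y => σs * Φ2 (projIcc a b hab y) + q (projIcc a b hab y)) (z:ℝ) μ) := by
      rw [intervalIntegral.integral_sub hint1 hint2]
      show (1/2 : ℝ) * _ - (1/2 : ℝ) * _ = _
      ring
    have hdiffb : ∀ μ ∈ Set.uIoc (-1:ℝ) 1,
        ‖Jop σt Ibd a b (fun y => σs * Φ1 (projIcc a b hab y) + q (projIcc a b hab y)) (z:ℝ) μ
          - Jop σt Ibd a b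
              (fun y => σs * Φ2 (projIcc a b hab y) + q (projIcc a b hab y)) (z:ℝ) μ‖
          ≤ σs * dist Φ1 Φ2 / σt := by
      intro μ _
      rw [Real.norm_eq_abs]
      refine Jop_sub_bound hσt (hHc Φ1) (hHc Φ2) ?_ hz μ
      intro y
      have hrw : (σs * Φ1 (projIcc a b hab y) + q (projIcc a b hab y))
          - (σs * Φ2 (projIcc a b hab y) + q (projIcc a b hab y))
          = σs * (Φ1 (projIcc a b hab y) - Φ2 (projIcc a b hab y)) := by ring
      rw [hrw, abs_mul, abs_of_nonneg hσs]
      refine mul_le_mul_of_nonneg_left ?_ hσs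
      rw [← Real.dist_eq]
      exact ContinuousMap.dist_apply_le_dist _
    have hnorm := intervalIntegral.norm_integral_le_of_norm_le_const hdiffb
    rw [Real.dist_eq, hTeq, abs_mul]
    rw [show |(1:ℝ)/2| = 1/2 from by norm_num]
    rw [← Real.norm_eq_abs]
    calc (1/2 : ℝ) * ‖_‖ ≤ (1/2 : ℝ) * (σs * dist Φ1 Φ2 / σt * |(1:ℝ) - (-1)|) := by
          exact mul_le_mul_of_nonneg_left hnorm (by norm_num)
      _ = σs / σt * dist Φ1 Φ2 := by
          rw [show |(1:ℝ) - (-1)| = 2 from by norm_num]; ring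
  have hcontrT : ContractingWith k T := ⟨hk1, hlip⟩
  set Φ := ContractingWith.fixedPoint T hcontrT with hΦdef
  have hfix : T Φ = Φ := hcontrT.fixedPoint_isFixedPt
  refine ⟨fun y => Φ (projIcc a b hab y), ⟨?_, ?_⟩, ?_⟩
  · exact (Φ.continuous.comp continuous_projIcc).continuousOn
  · intro x hx
    have h2 : Φ ⟨x, hx⟩ = (1/2 : ℝ) * ∫ μ in (-1:ℝ)..1,
        Jop σt Ibd a b (fun y => σs * Φ (projIcc a b hab y) + q (projIcc a b hab y)) x μ := by
      conv_lhs => rw [← hfix]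
      rfl
    have h1 : ∀ μ : ℝ, Imoc σt σs a b Ibd q (fun y => Φ (projIcc a b hab y)) x μ
        = Jop σt Ibd a b (fun y => σs * Φ (projIcc a b hab y) + q (projIcc a b hab y)) x μ := by
      intro μ
      rw [Imoc_eq_Jop]
      refine Jop_congr hab (fun y hy => ?_) hx μ
      simp [projIcc_of_mem hab hy]
    show Φ (projIcc a b hab x) = _
    rw [projIcc_of_mem hab hx, h2]
    congr 1
    exact (intervalIntegral.integral_congr fun μ _ => h1 μ).symm
  · rintro Ψ' ⟨hΨ'c, hΨ'e⟩ x hx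
    set Φ' : C(Icc a b, ℝ) := ⟨(Icc a b).restrict Ψ', hΨ'c.restrict⟩ with hΦ'def
    have hfix' : T Φ' = Φ' := by
      apply ContinuousMap.ext
      intro z
      have hz : (z : ℝ) ∈ Icc a b := z.2
      have h1 : ∀ μ : ℝ,
          Jop σt Ibd a b (fun y => σs * Φ' (projIcc a b hab y) + q (projIcc a b hab y)) (z:ℝ) μ
            = Imoc σt σs a b Ibd q Ψ' (z:ℝ) μ := by
        intro μ
        rw [Imoc_eq_Jop]
        refine Jop_congr hab (fun y hy => ?_) hz μ
        simp [hΦ'def, projIcc_of_mem hab hy]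
        exact Or.inl rfl
      show (1/2 : ℝ) * ∫ μ in (-1:ℝ)..1,
          Jop σt Ibd a b (fun y => σs * Φ' (projIcc a b hab y) + q (projIcc a b hab y)) (z:ℝ) μ
          = Ψ' (z : ℝ)
      rw [intervalIntegral.integral_congr fun μ _ => h1 μ]
      exact (hΨ'e (z : ℝ) hz).symm
    have huniq : Φ' = Φ := hcontrT.fixedPoint_unique hfix'
    show Ψ' x = Φ (projIcc a b hab x)
    rw [projIcc_of_mem hab hx, ← huniq]
    rfl
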